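/- Let f be a bounded probability density on ℝ, symmetric about zero, absolutely continuous with bounded and integrable derivative f', and let F be its distribution function. Then there exists a constant C > 0, depending only on f (e.g., C = 2·(sup|f|)·∫|f'|), such that for all θ ∈ ℝ: | ∫_ℝ (2F(y) − 1)²·( f(y − θ) − f(y) ) dy | ≤ C·θ². -/

import Mathlib

open MeasureTheory

set_option maxHeartbeats 1000000 in

/-- For a bounded, symmetric, absolutely continuous probability density `f` on `ℝ`
with bounded integrable derivative `f'` and cdf `F`, there is `C > 0` (depending only on `f`)
with `| ∫ (2F(y)−1)² (f(y−θ) − f(y)) dy | ≤ C θ²` for all `θ`. -/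
theorem squared_cdf_shift_second_order
    (f f' : ℝ → ℝ)
    (hfnn : ∀ x, 0 ≤ f x) (hfint : Integrable f)
    (hfprob : ∫ x, f x = 1)
    (hfbdd : ∃ M : ℝ, ∀ x, f x ≤ M)
    (hfsymm : ∀ x, f (-x) = f x)
    (hac : ∀ a b : ℝ, f b - f a = ∫ x in a..b, f' x)
    (hf'meas : Measurable f')
    (hf'bdd : ∃ M : ℝ, ∀ x, |f' x| ≤ M)
    (hf'int : Integrable f')
    (F : ℝ → ℝ) (hF : ∀ x, F x = ∫ y in Set.Iic x, f y) :
    ∃ C > (0 : ℝ), ∀ θ : ℝ,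
      |∫ y : ℝ, (2 * F y - 1) ^ 2 * (f (y - θ) - f y)| ≤ C * θ ^ 2 := by
  obtain ⟨M₀, hM₀⟩ := hfbdd
  obtain ⟨M₁, hM₁⟩ := hf'bdd
  set M : ℝ := max M₀ 1 with hMdef
  set M' : ℝ := max M₁ 1 with hM'def
  have hM1 : (1 : ℝ) ≤ M := le_max_right _ _
  have hM'1 : (1 : ℝ) ≤ M' := le_max_right _ _
  have hfM : ∀ x, f x ≤ M := fun x => (hM₀ x).trans (le_max_left _ _)
  have hf'M : ∀ x, |f' x| ≤ M' := fun x => (hM₁ x).trans (le_max_left _ _)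
  -- continuity of f
  have hfc : Continuous f := by
    have heq : f = fun b => f 0 + ∫ x in (0:ℝ)..b, f' x := by
      funext b; have := hac 0 b; linarith
    rw [heq]
    exact continuous_const.add
      (intervalIntegral.continuous_primitive (fun _ _ => hf'int.intervalIntegrable) 0)
  -- F b - F a = ∫ a..b f
  have hFsub : ∀ a b : ℝ, F b - F a = ∫ x in a..b, f x := by
    intro a b
    rw [hF, hF]
    exact intervalIntegral.integral_Iic_sub_Iic hfint.integrableOn hfint.integrableOn
  -- F has derivative f
  have hFder : ∀ x, HasDerivAt F (f x) x := by
    intro x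
    have h1 : HasDerivAt (fun u => ∫ t in (0:ℝ)..u, f t) (f x) x :=
      intervalIntegral.integral_hasDerivAt_right hfint.intervalIntegrable
        hfc.stronglyMeasurable.stronglyMeasurableAtFilter hfc.continuousAt
    have heq : F = fun u => F 0 + ∫ t in (0:ℝ)..u, f t := by
      funext u; have := hFsub 0 u; linarith
    rw [heq]
    exact h1.const_add (F 0)
  have hFc : Continuous F := continuous_iff_continuousAt.2 fun x => (hFder x).continuousAt
  -- bounds on F
  have hF0 : ∀ x, 0 ≤ F x := by
    intro x; rw [hF]
    exact setIntegral_nonneg measurableSet_Iic fun y _ => hfnn y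
  have hF1 : ∀ x, F x ≤ 1 := by
    intro x; rw [hF, ← hfprob]
    exact setIntegral_le_integral hfint (ae_of_all _ hfnn)
  have habs : ∀ x, |2 * F x - 1| ≤ 1 := fun x =>
    abs_le.2 ⟨by linarith [hF0 x], by linarith [hF1 x]⟩
  -- F(-y) = 1 - F(y)
  have hFneg : ∀ y, F (-y) = 1 - F y := by
    intro y
    have h1 : ∫ x in Set.Iic (-y), f x = ∫ x in Set.Ioi y, f x := by
      calc ∫ x in Set.Iic (-y), f x = ∫ x in Set.Iic (-y), f (-x) :=
            setIntegral_congr_fun measurableSet_Iic fun x _ => (hfsymm x).symm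
        _ = ∫ x in Set.Ioi (-(-y)), f x := integral_comp_neg_Iic _ _
        _ = ∫ x in Set.Ioi y, f x := by rw [neg_neg]
    have h2 : (∫ x in Set.Iic y, f x) + ∫ x in Set.Ioi y, f x = 1 := by
      rw [← hfprob, ← integral_add_compl measurableSet_Iic hfint, Set.compl_Iic]
    rw [hF, h1, hF] at *
    linarith
  -- derivative of the squared cdf
  have hgder : ∀ t, HasDerivAt (fun t => (2 * F t - 1) ^ 2) (4 * (2 * F t - 1) * f t) t := by
    intro t
    have h := (((hFder t).const_mul 2).sub_const 1).fun_pow 2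
    refine h.congr_deriv ?_
    ring
  -- increments of f and F
  have hfinc : ∀ y s : ℝ, |f (y + s) - f y| ≤ M' * |s| := by
    intro y s
    have h := hac y (y + s)
    rw [h]
    have := intervalIntegral.norm_integral_le_of_norm_le_const
      (a := y) (b := y + s) (C := M') (f := f') (fun x _ => hf'M x)
    simpa using this
  have hFinc : ∀ y s : ℝ, |F (y + s) - F y| ≤ M * |s| := by
    intro y s
    rw [hFsub]
    have := intervalIntegral.norm_integral_le_of_norm_le_const
      (a := y) (b := y + s) (C := M) (f := f)
      (fun x _ => by rw [Real.norm_eq_abs, abs_of_nonneg (hfnn x)]; exact hfM x)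
    simpa using this
  -- the shifted functional and its derivative
  set Φ : ℝ → ℝ := fun s => ∫ y, (2 * F (y + s) - 1) ^ 2 * f y with hΦdef
  set Φ' : ℝ → ℝ := fun s => ∫ y, (4 * (2 * F (y + s) - 1) * f (y + s)) * f y with hΦ'def
  have hgc : Continuous fun t => (2 * F t - 1) ^ 2 :=
    ((continuous_const.mul hFc).sub continuous_const).pow 2
  have hGc : Continuous fun t => 4 * (2 * F t - 1) * f t :=
    (continuous_const.mul ((continuous_const.mul hFc).sub continuous_const)).mul hfc
  have I1 : ∀ s : ℝ, Integrable fun y => (2 * F (y + s) - 1) ^ 2 * f y := by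
    intro s
    refine hfint.bdd_mul ((hgc.comp (continuous_id.add continuous_const)).aestronglyMeasurable)
      (c := 1) (ae_of_all _ fun y => ?_)
    rw [Real.norm_eq_abs, abs_pow]
    nlinarith [habs (y + s), abs_nonneg (2 * F (y + s) - 1)]
  have hkey : ∀ t y : ℝ, |(4 * (2 * F t - 1) * f t) * f y| ≤ 4 * M * f y := by
    intro t y
    rw [abs_mul, abs_mul, abs_mul, abs_of_nonneg (hfnn t), abs_of_nonneg (hfnn y),
      abs_of_nonneg (by norm_num : (0:ℝ) ≤ 4)]
    have h1 : |2 * F t - 1| * f t ≤ M := by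
      nlinarith [habs t, hfM t, hfnn t, abs_nonneg (2 * F t - 1)]
    have h2 := mul_le_mul_of_nonneg_right h1 (hfnn y)
    nlinarith
  have I2 : ∀ s : ℝ, Integrable fun y => (4 * (2 * F (y + s) - 1) * f (y + s)) * f y := by
    intro s
    refine hfint.bdd_mul ((hGc.comp (continuous_id.add continuous_const)).aestronglyMeasurable)
      (c := 4 * M) (ae_of_all _ fun y => ?_)
    rw [Real.norm_eq_abs, abs_mul, abs_mul, abs_of_nonneg (hfnn (y + s)),
      abs_of_nonneg (by norm_num : (0:ℝ) ≤ 4)]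
    nlinarith [habs (y + s), hfM (y + s), hfnn (y + s), abs_nonneg (2 * F (y + s) - 1)]
  -- Φ has derivative Φ'
  have hΦder : ∀ s, HasDerivAt Φ (Φ' s) s := by
    intro s
    have key := hasDerivAt_integral_of_dominated_loc_of_deriv_le
      (μ := volume) (x₀ := s) (Metric.ball_mem_nhds s one_pos)
      (F := fun x y => (2 * F (y + x) - 1) ^ 2 * f y)
      (F' := fun x y => (4 * (2 * F (y + x) - 1) * f (y + x)) * f y)
      (bound := fun y => 4 * M * f y)
      (Filter.Eventually.of_forall fun x => (I1 x).aestronglyMeasurable)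
      (I1 s) ((I2 s).aestronglyMeasurable)
      (ae_of_all _ fun y x _ => ?_)
      (hfint.const_mul (4 * M))
      (ae_of_all _ fun y x _ => ?_)
    · exact key.2
    · -- bound
      rw [Real.norm_eq_abs]
      exact hkey (y + x) y
    · -- differentiability in the parameter
      have hinner : HasDerivAt (fun x : ℝ => y + x) 1 x := (hasDerivAt_id x).const_add y
      have := ((hgder (y + x)).comp x hinner).mul_const (f y)
      simpa using this
  -- Φ'(0) = 0 by symmetry
  have hΦ'0 : Φ' 0 = 0 := by
    have hodd : ∀ y : ℝ,
        (4 * (2 * F (-y + 0) - 1) * f (-y + 0)) * f (-y)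
          = -((4 * (2 * F (y + 0) - 1) * f (y + 0)) * f y) := by
      intro y
      simp only [add_zero]
      rw [hFneg, hfsymm]
      ring
    have h1 : Φ' 0 = ∫ y, (4 * (2 * F (-y + 0) - 1) * f (-y + 0)) * f (-y) := by
      rw [hΦ'def]
      exact (integral_neg_eq_self _ _).symm
    have h2 : Φ' 0 = -Φ' 0 := by
      conv_lhs => rw [h1]
      simp_rw [hodd]
      rw [integral_neg]
    linarith
  -- bound on Φ'
  set K : ℝ := 4 * M' + 8 * M ^ 2 with hKdef
  have hKpos : 0 < K := by nlinarith
  have hΦ'bd : ∀ s : ℝ, |Φ' s| ≤ K * |s| := by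
    intro s
    have hsplit : Φ' s = ∫ y,
        ((4 * (2 * F (y + s) - 1) * f (y + s)) - (4 * (2 * F (y + 0) - 1) * f (y + 0))) * f y := by
      have h := integral_sub (I2 s) (I2 0)
      have h2 : (∫ y, ((4 * (2 * F (y + s) - 1) * f (y + s))
            - (4 * (2 * F (y + 0) - 1) * f (y + 0))) * f y)
          = (∫ y, (4 * (2 * F (y + s) - 1) * f (y + s)) * f y)
            - ∫ y, (4 * (2 * F (y + 0) - 1) * f (y + 0)) * f y := by
        rw [← h]
        congr 1
        funext y
        ring
      have h0 : Φ' 0 = ∫ y, (4 * (2 * F (y + 0) - 1) * f (y + 0)) * f y := rfl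
      have hs0 : Φ' s = ∫ y, (4 * (2 * F (y + s) - 1) * f (y + s)) * f y := rfl
      rw [h2, ← h0, ← hs0, hΦ'0, sub_zero]
    rw [hsplit]
    have hbd : ∀ y : ℝ,
        ‖((4 * (2 * F (y + s) - 1) * f (y + s)) - (4 * (2 * F (y + 0) - 1) * f (y + 0))) * f y‖
          ≤ (K * |s|) * f y := by
      intro y
      rw [Real.norm_eq_abs, abs_mul, abs_of_nonneg (hfnn y), add_zero]
      have hdecomp : (4 * (2 * F (y + s) - 1) * f (y + s)) - (4 * (2 * F y - 1) * f y)
          = 4 * (2 * F (y + s) - 1) * (f (y + s) - f y)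
            + 8 * (F (y + s) - F y) * f y := by ring
      rw [hdecomp]
      have h1 : |4 * (2 * F (y + s) - 1) * (f (y + s) - f y)| ≤ 4 * (M' * |s|) := by
        rw [abs_mul, abs_mul, abs_of_nonneg (by norm_num : (0:ℝ) ≤ 4)]
        nlinarith [habs (y + s), hfinc y s, abs_nonneg (f (y + s) - f y),
          abs_nonneg (2 * F (y + s) - 1)]
      have h2 : |8 * (F (y + s) - F y) * f y| ≤ 8 * (M * |s|) * M := by
        rw [abs_mul, abs_mul, abs_of_nonneg (by norm_num : (0:ℝ) ≤ 8),
          abs_of_nonneg (hfnn y)]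
        nlinarith [hFinc y s, hfM y, hfnn y, abs_nonneg (F (y + s) - F y)]
      have h3 := abs_add_le (4 * (2 * F (y + s) - 1) * (f (y + s) - f y))
        (8 * (F (y + s) - F y) * f y)
      have h4 : |4 * (2 * F (y + s) - 1) * (f (y + s) - f y) + 8 * (F (y + s) - F y) * f y|
          ≤ K * |s| := by
        rw [hKdef]
        nlinarith [abs_nonneg s]
      nlinarith [hfnn y, hfM y, abs_nonneg
        (4 * (2 * F (y + s) - 1) * (f (y + s) - f y) + 8 * (F (y + s) - F y) * f y)]
    have := norm_integral_le_of_norm_le ((hfint.const_mul (K * |s|))) (ae_of_all _ hbd)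
    rw [Real.norm_eq_abs] at this
    calc |∫ y, ((4 * (2 * F (y + s) - 1) * f (y + s))
            - (4 * (2 * F (y + 0) - 1) * f (y + 0))) * f y|
        ≤ ∫ y, (K * |s|) * f y := this
      _ = (K * |s|) * ∫ y, f y := integral_const_mul _ _
      _ = K * |s| := by rw [hfprob, mul_one]
  refine ⟨K, hKpos, fun θ => ?_⟩
  -- rewrite the target integral as Φ θ - Φ 0
  have hshift : ∫ y : ℝ, (2 * F y - 1) ^ 2 * f (y - θ) = Φ θ := by
    have := integral_add_right_eq_self (μ := volume) (fun y => (2 * F y - 1) ^ 2 * f (y - θ)) θ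
    rw [← this, hΦdef]
    congr 1
    funext y
    simp [add_sub_cancel_right]
  have hJ1 : Integrable fun y => (2 * F y - 1) ^ 2 * f (y - θ) := by
    refine (hfint.comp_sub_right θ).bdd_mul hgc.aestronglyMeasurable (c := 1) (ae_of_all _ fun y => ?_)
    rw [Real.norm_eq_abs, abs_pow]
    nlinarith [habs y, abs_nonneg (2 * F y - 1)]
  have hJ2 : Integrable fun y => (2 * F y - 1) ^ 2 * f y := by
    have := I1 0
    simpa using this
  have hTeq : (∫ y : ℝ, (2 * F y - 1) ^ 2 * (f (y - θ) - f y)) = Φ θ - Φ 0 := by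
    have h1 : (∫ y : ℝ, (2 * F y - 1) ^ 2 * (f (y - θ) - f y))
        = (∫ y : ℝ, (2 * F y - 1) ^ 2 * f (y - θ)) - ∫ y : ℝ, (2 * F y - 1) ^ 2 * f y := by
      rw [← integral_sub hJ1 hJ2]
      congr 1; funext y; ring
    have h2 : Φ 0 = ∫ y : ℝ, (2 * F y - 1) ^ 2 * f y := by
      rw [hΦdef]; simp
    rw [h1, hshift, h2]
  rw [hTeq]
  -- mean value inequality on the segment [0, θ]
  have hmvt : ‖Φ θ - Φ 0‖ ≤ (K * |θ|) * ‖θ - 0‖ := by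
    refine Convex.norm_image_sub_le_of_norm_hasDerivWithin_le
      (fun x _ => (hΦder x).hasDerivWithinAt) (fun x hx => ?_) (convex_uIcc 0 θ)
      (Set.left_mem_uIcc) (Set.right_mem_uIcc)
    rw [Real.norm_eq_abs]
    have hxθ : |x| ≤ |θ| := by
      rcases le_total 0 θ with h | h
      · rw [Set.uIcc_of_le h] at hx
        rw [abs_of_nonneg hx.1, abs_of_nonneg h]
        exact hx.2
      · rw [Set.uIcc_of_ge h] at hx
        rw [abs_of_nonpos hx.2, abs_of_nonpos h]
        linarith [hx.1]
    calc |Φ' x| ≤ K * |x| := hΦ'bd x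
      _ ≤ K * |θ| := by nlinarith
  rw [Real.norm_eq_abs, Real.norm_eq_abs, sub_zero] at hmvt
  calc |Φ θ - Φ 0| ≤ (K * |θ|) * |θ| := hmvt
    _ = K * θ ^ 2 := by rw [mul_assoc, ← abs_mul, ← sq, abs_of_nonneg (sq_nonneg θ)]
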